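/- There exists an absolute constant C > 0 such that for every complex Borel measure μ of finite total variation on the unit circle and every t > 0, the normalized Lebesgue measure of the set of θ ∈ [0, 2π) at which the non-tangential limit I_μ*(θ) of the Cauchy integral I_μ exists and satisfies |I_μ*(θ)| > t is at most C · ‖μ‖ / t, where ‖μ‖ denotes the total variation (total mass) of μ. -/

import Mathlib

open MeasureTheory Complex Filter Set Metric ENNReal

noncomputable section

/-- The non-tangential approach region `Ω_α ⊂ D` with vertex `1`: the union of the open
disc of radius `α` centered at `0` with the (open) line segments joining `1` to the points
of that disc. -/
def OmegaRegion (α : ℝ) : Set ℂ :=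
  Metric.ball (0 : ℂ) α ∪ ⋃ w ∈ Metric.ball (0 : ℂ) α, openSegment ℝ (1 : ℂ) w

/-- The rotated non-tangential approach region `Ω_α(θ) = e^{iθ} Ω_α` with vertex `e^{iθ}`. -/
def OmegaRegionAt (α θ : ℝ) : Set ℂ :=
  (fun z : ℂ => Complex.exp (θ * Complex.I) * z) '' OmegaRegion α

/-- `Φ : ℂ → ℂ` has non-tangential limit `L` at `e^{iθ}` if for every `0 < α < 1`,
`Φ(z) → L` as `z → e^{iθ}` within `Ω_α(θ)`. -/
def HasNTLimit (Φ : ℂ → ℂ) (θ : ℝ) (L : ℂ) : Prop :=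
  ∀ α ∈ Set.Ioo (0 : ℝ) 1,
    Filter.Tendsto Φ (nhdsWithin (Complex.exp (θ * Complex.I)) (OmegaRegionAt α θ)) (nhds L)

/-- The Cauchy integral of the complex Borel measure `f dν` on the circle (parametrized by
`t ∈ [0, 2π)` via `t ↦ e^{it}`): `I_μ(z) = ∫₀^{2π} (z − e^{it})⁻¹ dμ(t)`. -/
def cauchyIntegral (ν : Measure ℝ) (f : ℝ → ℂ) (z : ℂ) : ℂ :=
  ∫ t in Set.Ico (0 : ℝ) (2 * Real.pi), (z - Complex.exp (t * Complex.I))⁻¹ * f t ∂ν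

/-- The total variation (total mass) of the complex measure `f dν` on `[0, 2π)`. -/
def totalVariation (ν : Measure ℝ) (f : ℝ → ℂ) : ℝ :=
  ∫ t in Set.Ico (0 : ℝ) (2 * Real.pi), ‖f t‖ ∂ν

/-- The Hardy space (quasi-)norm `‖Φ‖_{H^p} = sup_{0 ≤ r < 1} (∫₀^{2π} |Φ(re^{iθ})|^p dθ/2π)^{1/p}`,
valued in `ℝ≥0∞`. -/
def hardyNorm (p : ℝ) (Φ : ℂ → ℂ) : ℝ≥0∞ :=
  ⨆ r ∈ Set.Ico (0 : ℝ) 1,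
    ((∫⁻ θ in Set.Ico (0 : ℝ) (2 * Real.pi),
        ENNReal.ofReal (‖Φ ((r : ℂ) * Complex.exp (θ * Complex.I))‖ ^ p))
      / ENNReal.ofReal (2 * Real.pi)) ^ (1 / p)

/-- The non-tangential maximal function `N_α(Φ)(θ) = sup{|Φ(z)| : z ∈ Ω_α(θ)} ∈ [0, ∞]`. -/
def ntMax (α : ℝ) (Φ : ℂ → ℂ) (θ : ℝ) : ℝ≥0∞ :=
  ⨆ z ∈ OmegaRegionAt α θ, ENNReal.ofReal ‖Φ z‖

/-- The `L^p` (quasi-)norm of the non-tangential maximal function `N_α(Φ)` with respect to the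
normalized Lebesgue measure on `[0, 2π)`. -/
def ntMaxLpNorm (p α : ℝ) (Φ : ℂ → ℂ) : ℝ≥0∞ :=
  ((∫⁻ θ in Set.Ico (0 : ℝ) (2 * Real.pi), (ntMax α Φ θ) ^ p)
    / ENNReal.ofReal (2 * Real.pi)) ^ (1 / p)

namespace CWT

/-- Herglotz-type kernel. -/
def W (z : ℂ) (t : ℝ) : ℂ := 1 - 2 * z * (z - Complex.exp (t * Complex.I))⁻¹

lemma exp_ne (z : ℂ) (hz : ‖z‖ < 1) (t : ℝ) : z - Complex.exp (t * Complex.I) ≠ 0 := by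
  intro h
  have : z = Complex.exp (t * Complex.I) := by linear_combination h
  rw [this] at hz
  simp [Complex.norm_exp_ofReal_mul_I] at hz

lemma W_eq (z : ℂ) (hz : ‖z‖ < 1) (t : ℝ) :
    W z t = (Complex.exp (t * Complex.I) + z) / (Complex.exp (t * Complex.I) - z) := by
  have h := exp_ne z hz t
  have h2 : Complex.exp (t * Complex.I) - z ≠ 0 := by
    intro h0; apply h; linear_combination -h0
  rw [W, eq_div_iff h2]
  have hx : (z - Complex.exp (t * Complex.I))⁻¹ * (Complex.exp (t * Complex.I) - z) = -1 := by
    rw [← neg_sub z (Complex.exp (t * Complex.I)), mul_neg, inv_mul_cancel₀ h]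
  linear_combination (-2*z) * hx

lemma W_re_nonneg (z : ℂ) (hz : ‖z‖ < 1) (t : ℝ) : 0 ≤ (W z t).re := by
  rw [W_eq z hz t]
  set a := Complex.exp (t * Complex.I) with ha
  have hnsa : Complex.normSq a = 1 := by
    have : ‖a‖ = 1 := Complex.norm_exp_ofReal_mul_I t
    rw [← Complex.sq_norm, this]; norm_num
  have hnz : Complex.normSq z < 1 := by
    have : ‖z‖ < 1 := hz
    calc Complex.normSq z = ‖z‖^2 := (Complex.sq_norm z).symm
    _ < 1 := by nlinarith [norm_nonneg z]
  rw [Complex.div_re]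
  have h1 : (a + z).re * (a - z).re + (a + z).im * (a - z).im
      = Complex.normSq a - Complex.normSq z := by
    simp [Complex.normSq_apply, Complex.add_re, Complex.add_im, Complex.sub_re, Complex.sub_im]
    ring
  have h2 : 0 ≤ Complex.normSq (a - z) := Complex.normSq_nonneg _
  rw [← add_div, h1, hnsa]
  exact div_nonneg (by linarith) (Complex.normSq_nonneg _)

lemma W_zero (t : ℝ) : W 0 t = 1 := by simp [W]

end CWT

namespace CWT2
open CWT

lemma norm_sub_exp_ge {z : ℂ} (hz : ‖z‖ < 1) (t : ℝ) :
    1 - ‖z‖ ≤ ‖z - Complex.exp (t * Complex.I)‖ := by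
  have h : ‖Complex.exp (t * Complex.I)‖ = 1 := Complex.norm_exp_ofReal_mul_I t
  calc 1 - ‖z‖ = ‖Complex.exp (t * Complex.I)‖ - ‖z‖ := by rw [h]
  _ ≤ ‖Complex.exp (t * Complex.I) - z‖ := by
      have := norm_sub_norm_le (Complex.exp (t * Complex.I)) z; linarith
  _ = ‖z - Complex.exp (t * Complex.I)‖ := norm_sub_rev _ _

lemma norm_W_le {z : ℂ} (hz : ‖z‖ < 1) (t : ℝ) : ‖W z t‖ ≤ 3 / (1 - ‖z‖) := by
  have h0 : (0:ℝ) < 1 - ‖z‖ := by linarith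
  have hd := norm_sub_exp_ge hz t
  have hinv : ‖(z - Complex.exp (t * Complex.I))⁻¹‖ ≤ (1 - ‖z‖)⁻¹ := by
    rw [norm_inv]
    exact inv_anti₀ h0 hd
  calc ‖W z t‖ ≤ ‖(1:ℂ)‖ + ‖2 * z * (z - Complex.exp (t * Complex.I))⁻¹‖ := norm_sub_le _ _
  _ = 1 + 2 * ‖z‖ * ‖(z - Complex.exp (t * Complex.I))⁻¹‖ := by
      simp [norm_mul]
  _ ≤ 1 + 2 * 1 * (1 - ‖z‖)⁻¹ := by
      have h1 : 0 ≤ ‖z‖ := norm_nonneg z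
      have h2 : (0:ℝ) ≤ ‖(z - Complex.exp (t * Complex.I))⁻¹‖ := norm_nonneg _
      have h3 : (0:ℝ) ≤ (1 - ‖z‖)⁻¹ := by positivity
      nlinarith
  _ ≤ 3 / (1 - ‖z‖) := by
      rw [div_eq_mul_inv]
      have h3 : (1:ℝ) ≤ (1 - ‖z‖)⁻¹ := by
        simpa using inv_anti₀ h0 (by linarith [norm_nonneg z] : 1 - ‖z‖ ≤ 1)
      nlinarith

/-- derivative of `W · t`. -/
def Wd (z : ℂ) (t : ℝ) : ℂ :=
  -(2 * (z - Complex.exp (t * Complex.I))⁻¹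
    + 2 * z * (-1 / (z - Complex.exp (t * Complex.I)) ^ 2))

lemma hasDerivAt_W {z : ℂ} (hz : ‖z‖ < 1) (t : ℝ) :
    HasDerivAt (fun w => W w t) (Wd z t) z := by
  have hne := exp_ne z hz t
  have h1 : HasDerivAt (fun w : ℂ => w - Complex.exp (t * Complex.I)) 1 z :=
    (hasDerivAt_id z).sub_const _
  have h2 : HasDerivAt (fun w : ℂ => (w - Complex.exp (t * Complex.I))⁻¹)
      (-1 / (z - Complex.exp (t * Complex.I)) ^ 2) z := by
    exact h1.inv hne
  have h3 : HasDerivAt (fun w : ℂ => 2 * w) 2 z := by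
    simpa using (hasDerivAt_id z).const_mul (2:ℂ)
  have h4 := h3.mul h2
  have h5 := (hasDerivAt_const z (1:ℂ)).sub h4
  have hWd : Wd z t = 0 - (2 * (z - Complex.exp (t * Complex.I))⁻¹
      + 2 * z * (-1 / (z - Complex.exp (t * Complex.I)) ^ 2)) := by simp only [Wd, zero_sub]
  rw [hWd]
  exact h5

lemma norm_Wd_le {z : ℂ} (hz : ‖z‖ < 1) (t : ℝ) : ‖Wd z t‖ ≤ 4 / (1 - ‖z‖) ^ 2 := by
  have h0 : (0:ℝ) < 1 - ‖z‖ := by linarith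
  have hd := norm_sub_exp_ge hz t
  have hinv : ‖(z - Complex.exp (t * Complex.I))⁻¹‖ ≤ (1 - ‖z‖)⁻¹ := by
    rw [norm_inv]; exact inv_anti₀ h0 hd
  have hp : (1 - ‖z‖) ^ 2 ≤ ‖(z - Complex.exp (t * Complex.I)) ^ 2‖ := by
    rw [norm_pow]; exact pow_le_pow_left₀ h0.le hd 2
  have hinv2 : ‖(-1 / (z - Complex.exp (t * Complex.I)) ^ 2 : ℂ)‖ ≤ ((1 - ‖z‖) ^ 2)⁻¹ := by
    rw [norm_div, norm_neg, norm_one, one_div]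
    exact inv_anti₀ (by positivity) hp
  have hi2 : (1 - ‖z‖)⁻¹ ≤ ((1 - ‖z‖) ^ 2)⁻¹ := by
    apply inv_anti₀ (by positivity)
    nlinarith [norm_nonneg z, h0]
  have hz1 : ‖z‖ ≤ 1 := hz.le
  calc ‖Wd z t‖ ≤ ‖2 * (z - Complex.exp (t * Complex.I))⁻¹‖
        + ‖2 * z * (-1 / (z - Complex.exp (t * Complex.I)) ^ 2)‖ := by
        rw [Wd, norm_neg]; exact norm_add_le _ _
  _ = 2 * ‖(z - Complex.exp (t * Complex.I))⁻¹‖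
        + 2 * ‖z‖ * ‖(-1 / (z - Complex.exp (t * Complex.I)) ^ 2 : ℂ)‖ := by
        simp [norm_mul]
  _ ≤ 2 * ((1 - ‖z‖) ^ 2)⁻¹ + 2 * 1 * ((1 - ‖z‖) ^ 2)⁻¹ := by
        have := norm_nonneg ((-1 / (z - Complex.exp (t * Complex.I)) ^ 2 : ℂ))
        have h4 : ‖(z - Complex.exp (t * Complex.I))⁻¹‖ ≤ ((1 - ‖z‖) ^ 2)⁻¹ := hinv.trans hi2
        nlinarith [norm_nonneg z]
  _ = 4 / (1 - ‖z‖) ^ 2 := by rw [div_eq_mul_inv]; ring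

end CWT2

namespace CWT3
open CWT CWT2

/-- Herglotz integral of the (real) density `g` w.r.t. `ρ`. -/
def G (ρ : Measure ℝ) (g : ℝ → ℝ) (z : ℂ) : ℂ := ∫ t, W z t * (g t : ℂ) ∂ρ

lemma continuous_W_t {z : ℂ} (hz : ‖z‖ < 1) : Continuous fun t : ℝ => W z t := by
  apply Continuous.sub continuous_const
  apply Continuous.mul continuous_const
  apply Continuous.inv₀
  · fun_prop
  · exact fun t => exp_ne z hz t

lemma aesm_W_mul {ρ : Measure ℝ} {g : ℝ → ℝ} (hg : AEStronglyMeasurable g ρ) {z : ℂ}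
    (hz : ‖z‖ < 1) : AEStronglyMeasurable (fun t => W z t * (g t : ℂ)) ρ :=
  ((continuous_W_t hz).aestronglyMeasurable).mul (Complex.continuous_ofReal.comp_aestronglyMeasurable hg)

lemma integrable_W_mul {ρ : Measure ℝ} {g : ℝ → ℝ} (hg : Integrable g ρ) {z : ℂ}
    (hz : ‖z‖ < 1) : Integrable (fun t => W z t * (g t : ℂ)) ρ := by
  apply Integrable.mono' (hg.norm.const_mul (3 / (1 - ‖z‖))) (aesm_W_mul hg.1 hz)
  filter_upwards with t
  rw [norm_mul, Complex.norm_real]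
  have := norm_W_le hz t
  have h2 : ‖g t‖ = |g t| := rfl
  have := abs_nonneg (g t)
  have h3 : (0:ℝ) ≤ 3 / (1 - ‖z‖) := div_nonneg (by norm_num) (by linarith)
  calc ‖W z t‖ * ‖(g t:ℝ)‖ ≤ 3 / (1 - ‖z‖) * ‖g t‖ := by
        apply mul_le_mul_of_nonneg_right (norm_W_le hz t) (norm_nonneg _)
  _ = 3 / (1 - ‖z‖) * ‖g t‖ := rfl

lemma hasDerivAt_G {ρ : Measure ℝ} {g : ℝ → ℝ} (hg : Integrable g ρ) {z : ℂ}
    (hz : ‖z‖ < 1) :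
    HasDerivAt (G ρ g) (∫ t, Wd z t * (g t : ℂ) ∂ρ) z := by
  set ε := (1 - ‖z‖) / 2 with hε
  have hε0 : 0 < ε := by rw [hε]; linarith
  have hball : ∀ x ∈ Metric.ball z ε, ‖x‖ < 1 ∧ (1 - ‖z‖)/2 ≤ 1 - ‖x‖ := by
    intro x hx
    rw [Metric.mem_ball, dist_eq_norm] at hx
    have := norm_sub_norm_le x z
    constructor <;> [skip; skip] <;> · simp only [hε] at hx ⊢; linarith
  have key := hasDerivAt_integral_of_dominated_loc_of_deriv_le (μ := ρ)
    (F := fun w t => W w t * (g t : ℂ)) (F' := fun w t => Wd w t * (g t : ℂ))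
    (x₀ := z) (bound := fun t => 4 / ((1 - ‖z‖)/2) ^ 2 * ‖g t‖) (Metric.ball_mem_nhds z hε0)
    ?_ (integrable_W_mul hg hz) ?_ ?_ (hg.norm.const_mul _) ?_
  · exact key.2
  · filter_upwards [Metric.ball_mem_nhds z hε0] with x hx
    exact aesm_W_mul hg.1 (hball x hx).1
  · apply AEStronglyMeasurable.mul _ (Complex.continuous_ofReal.comp_aestronglyMeasurable hg.1)
    apply Continuous.aestronglyMeasurable
    apply Continuous.neg
    apply Continuous.add
    · exact Continuous.mul continuous_const (Continuous.inv₀ (by fun_prop) (fun t => exp_ne z hz t))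
    · apply Continuous.mul continuous_const
      apply Continuous.div continuous_const (by fun_prop)
      intro t
      exact pow_ne_zero 2 (exp_ne z hz t)
  · filter_upwards with t x hx
    obtain ⟨hx1, hx2⟩ := hball x hx
    rw [norm_mul, Complex.norm_real]
    apply mul_le_mul_of_nonneg_right _ (norm_nonneg _)
    calc ‖Wd x t‖ ≤ 4 / (1 - ‖x‖) ^ 2 := norm_Wd_le hx1 t
    _ ≤ 4 / ((1 - ‖z‖)/2) ^ 2 := by
        apply div_le_div_of_nonneg_left (by norm_num) (by positivity)
        apply pow_le_pow_left₀ (by positivity) hx2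
  · filter_upwards with t x hx
    exact (hasDerivAt_W (hball x hx).1 t).mul_const _

lemma G_re_nonneg {ρ : Measure ℝ} {g : ℝ → ℝ} (hg : Integrable g ρ) (hg0 : ∀ t, 0 ≤ g t)
    {z : ℂ} (hz : ‖z‖ < 1) : 0 ≤ (G ρ g z).re := by
  have h := integral_re (integrable_W_mul hg hz)
  simp only [RCLike.re_to_complex] at h
  rw [G, ← h]
  apply integral_nonneg
  intro t
  simp only [Complex.mul_re, Complex.ofReal_re, Complex.ofReal_im, mul_zero, sub_zero]
  exact mul_nonneg (W_re_nonneg z hz t) (hg0 t)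

lemma G_zero {ρ : Measure ℝ} (g : ℝ → ℝ) : G ρ g 0 = ((∫ t, g t ∂ρ : ℝ) : ℂ) := by
  rw [G]
  simp only [W_zero, one_mul]
  exact integral_ofReal

end CWT3

namespace CWT4
open CWT CWT2 CWT3 Real

lemma Hden_re_pos {w : ℂ} {s : ℝ} (hs : 0 < s) (hw : 0 ≤ w.re) : 0 < (w + (s:ℂ)).re := by
  simp only [Complex.add_re, Complex.ofReal_re]; linarith

lemma Hden_ne {w : ℂ} {s : ℝ} (hs : 0 < s) (hw : 0 ≤ w.re) : w + (s:ℂ) ≠ 0 := by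
  intro h
  have := Hden_re_pos hs hw
  rw [h] at this
  simp at this

lemma Hre_eq {w : ℂ} {s : ℝ} (hs : 0 < s) (hw : 0 ≤ w.re) :
    (w / (w + (s:ℂ))).re
      = (w.re * (w.re + s) + w.im * w.im) / ((w.re + s)^2 + w.im^2) := by
  rw [Complex.div_re]
  have : Complex.normSq (w + (s:ℂ)) = (w.re + s)^2 + w.im^2 := by
    simp [Complex.normSq_apply, Complex.add_re, Complex.add_im]; ring
  rw [this]
  simp only [Complex.add_re, Complex.add_im, Complex.ofReal_re, Complex.ofReal_im, add_zero]
  ring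

lemma Hre_nonneg {w : ℂ} {s : ℝ} (hs : 0 < s) (hw : 0 ≤ w.re) :
    0 ≤ (w / (w + (s:ℂ))).re := by
  rw [Hre_eq hs hw]
  have hD : 0 < (w.re + s)^2 + w.im^2 := by positivity
  apply div_nonneg _ hD.le
  nlinarith

lemma Hre_le_one {w : ℂ} {s : ℝ} (hs : 0 < s) (hw : 0 ≤ w.re) :
    (w / (w + (s:ℂ))).re ≤ 1 := by
  rw [Hre_eq hs hw]
  have hD : 0 < (w.re + s)^2 + w.im^2 := by positivity
  rw [div_le_one hD]
  nlinarith

lemma Hre_ge_half {w : ℂ} {s : ℝ} (hs : 0 < s) (hw : 0 ≤ w.re) (hn : s ≤ ‖w‖) :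
    1/2 ≤ (w / (w + (s:ℂ))).re := by
  rw [Hre_eq hs hw]
  have hD : 0 < (w.re + s)^2 + w.im^2 := by positivity
  rw [le_div_iff₀ hD]
  have h2 : s^2 ≤ w.re^2 + w.im^2 := by
    have h3 : s^2 ≤ ‖w‖^2 := by nlinarith [norm_nonneg w]
    have h4 : ‖w‖^2 = w.re^2 + w.im^2 := by
      rw [Complex.sq_norm, Complex.normSq_apply]; ring
    linarith
  nlinarith

lemma Hre_at_real {m s : ℝ} (hs : 0 < s) (hm : 0 ≤ m) :
    (((m:ℂ)) / ((m:ℂ) + (s:ℂ))).re ≤ m / s := by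
  have hw : 0 ≤ ((m:ℂ)).re := by simpa using hm
  rw [Hre_eq hs hw]
  simp only [Complex.ofReal_re, Complex.ofReal_im]
  have hD : 0 < (m + s)^2 + (0:ℝ)^2 := by positivity
  rw [div_le_div_iff₀ hD hs]
  nlinarith [pow_nonneg hm 3, mul_nonneg (mul_nonneg hm hm) hs.le]

/-- Mean value property on the circle of radius `r`. -/
lemma meanValue {Φ : ℂ → ℂ} (hΦ : DifferentiableOn ℂ Φ (Metric.ball (0:ℂ) 1))
    {r : ℝ} (hr0 : 0 < r) (hr1 : r < 1) :
    ∫ θ in Set.Ico (0:ℝ) (2*π), (Φ ((r:ℂ) * Complex.exp (θ * Complex.I))).re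
      = 2 * π * (Φ 0).re := by
  have hd : DifferentiableOn ℂ Φ (Metric.closedBall (0:ℂ) r) :=
    hΦ.mono (Metric.closedBall_subset_ball hr1)
  have h0 : (0:ℂ) ∈ Metric.ball (0:ℂ) r := by simpa using hr0
  have hc := hd.circleIntegral_sub_inv_smul h0
  -- rewrite circleIntegral
  rw [circleIntegral] at hc
  have hmap : ∀ θ : ℝ, circleMap 0 r θ = (r:ℂ) * Complex.exp (θ * Complex.I) := by
    intro θ; simp [circleMap]
  have hne : ∀ θ : ℝ, (r:ℂ) * Complex.exp (θ * Complex.I) ≠ 0 := by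
    intro θ
    apply mul_ne_zero
    · exact_mod_cast hr0.ne'
    · exact Complex.exp_ne_zero _
  have hint : (∫ θ in (0:ℝ)..(2*π), deriv (circleMap 0 r) θ • (circleMap 0 r θ - 0)⁻¹ • Φ (circleMap 0 r θ))
      = Complex.I * ∫ θ in (0:ℝ)..(2*π), Φ ((r:ℂ) * Complex.exp (θ * Complex.I)) := by
    rw [← intervalIntegral.integral_const_mul]
    apply intervalIntegral.integral_congr
    intro θ _
    simp only [deriv_circleMap, hmap, smul_eq_mul, sub_zero]
    rw [mul_comm ((r:ℂ) * Complex.exp (θ * Complex.I)) Complex.I, mul_assoc,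
      mul_inv_cancel_left₀ (hne θ)]
  rw [hint] at hc
  have h2pi : Complex.I * ∫ θ in (0:ℝ)..(2*π), Φ ((r:ℂ) * Complex.exp (θ * Complex.I))
      = Complex.I * ((2*π : ℝ) * Φ 0) := by
    rw [hc]
    simp [Complex.real_smul]
    ring
  have hI : (Complex.I : ℂ) ≠ 0 := Complex.I_ne_zero
  have hval := mul_left_cancel₀ hI h2pi
  -- take real parts, convert interval integral to set integral
  have hcont : Continuous fun θ : ℝ => Φ ((r:ℂ) * Complex.exp (θ * Complex.I)) := by
    apply hd.continuousOn.comp_continuous (by fun_prop)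
    intro θ
    simp [Metric.mem_closedBall, Complex.norm_exp_ofReal_mul_I, abs_of_pos hr0]
  have hIoc : (∫ θ in (0:ℝ)..(2*π), Φ ((r:ℂ) * Complex.exp (θ * Complex.I)))
      = ∫ θ in Set.Ioc (0:ℝ) (2*π), Φ ((r:ℂ) * Complex.exp (θ * Complex.I)) :=
    intervalIntegral.integral_of_le (by positivity)
  have hre : (∫ θ in Set.Ioc (0:ℝ) (2*π), Φ ((r:ℂ) * Complex.exp (θ * Complex.I))).re
      = ∫ θ in Set.Ioc (0:ℝ) (2*π), (Φ ((r:ℂ) * Complex.exp (θ * Complex.I))).re := by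
    have hInt : Integrable (fun θ : ℝ => Φ ((r:ℂ) * Complex.exp (θ * Complex.I)))
        (volume.restrict (Set.Ioc (0:ℝ) (2*π))) := by
      apply Continuous.integrableOn_Ioc hcont
    have := integral_re hInt
    simp only [RCLike.re_to_complex] at this
    exact this.symm
  calc ∫ θ in Set.Ico (0:ℝ) (2*π), (Φ ((r:ℂ) * Complex.exp (θ * Complex.I))).re
      = ∫ θ in Set.Ioo (0:ℝ) (2*π), (Φ ((r:ℂ) * Complex.exp (θ * Complex.I))).re :=
        integral_Ico_eq_integral_Ioo
  _ = ∫ θ in Set.Ioc (0:ℝ) (2*π), (Φ ((r:ℂ) * Complex.exp (θ * Complex.I))).re :=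
        integral_Ioc_eq_integral_Ioo.symm
  _ = (∫ θ in Set.Ioc (0:ℝ) (2*π), Φ ((r:ℂ) * Complex.exp (θ * Complex.I))).re := hre.symm
  _ = 2 * π * (Φ 0).re := by
        rw [← hIoc, hval]
        simp [Complex.ofReal_mul]

end CWT4

namespace CWT5
open CWT CWT2 CWT3 CWT4 Real

variable {ρ : Measure ℝ} {g : ℝ → ℝ}

/-- The Kolmogorov auxiliary function `h = Re (G/(G+s))`. -/
def hfun (ρ : Measure ℝ) (g : ℝ → ℝ) (s : ℝ) (z : ℂ) : ℝ :=
  (G ρ g z / (G ρ g z + (s:ℂ))).re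

lemma diffG (hg : Integrable g ρ) : DifferentiableOn ℂ (G ρ g) (Metric.ball (0:ℂ) 1) := by
  intro z hz
  rw [Metric.mem_ball, dist_zero_right] at hz
  exact (hasDerivAt_G hg hz).differentiableAt.differentiableWithinAt

lemma diffPhi (hg : Integrable g ρ) (hg0 : ∀ t, 0 ≤ g t) {s : ℝ} (hs : 0 < s) :
    DifferentiableOn ℂ (fun z => G ρ g z / (G ρ g z + (s:ℂ))) (Metric.ball (0:ℂ) 1) := by
  apply DifferentiableOn.div (diffG hg) ((diffG hg).add_const _)
  intro z hz
  rw [Metric.mem_ball, dist_zero_right] at hz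
  exact Hden_ne hs (G_re_nonneg hg hg0 hz)

lemma hfun_nonneg (hg : Integrable g ρ) (hg0 : ∀ t, 0 ≤ g t) {s : ℝ} (hs : 0 < s)
    {z : ℂ} (hz : ‖z‖ < 1) : 0 ≤ hfun ρ g s z :=
  Hre_nonneg hs (G_re_nonneg hg hg0 hz)

lemma hfun_le_one (hg : Integrable g ρ) (hg0 : ∀ t, 0 ≤ g t) {s : ℝ} (hs : 0 < s)
    {z : ℂ} (hz : ‖z‖ < 1) : hfun ρ g s z ≤ 1 :=
  Hre_le_one hs (G_re_nonneg hg hg0 hz)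

lemma hfun_ge_half (hg : Integrable g ρ) (hg0 : ∀ t, 0 ≤ g t) {s : ℝ} (hs : 0 < s)
    {z : ℂ} (hz : ‖z‖ < 1) (hn : s ≤ ‖G ρ g z‖) : 1/2 ≤ hfun ρ g s z :=
  Hre_ge_half hs (G_re_nonneg hg hg0 hz) hn

lemma hfun_circle_integral (hg : Integrable g ρ) (hg0 : ∀ t, 0 ≤ g t) {s : ℝ} (hs : 0 < s)
    {r : ℝ} (hr0 : 0 < r) (hr1 : r < 1) :
    ∫ θ in Set.Ico (0:ℝ) (2*π), hfun ρ g s ((r:ℂ) * Complex.exp (θ * Complex.I))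
      ≤ 2 * π * ((∫ t, g t ∂ρ) / s) := by
  have hm0 : 0 ≤ ∫ t, g t ∂ρ := integral_nonneg hg0
  have h1 := meanValue (diffPhi hg hg0 hs) hr0 hr1
  have h2 : (G ρ g 0 / (G ρ g 0 + (s:ℂ))).re ≤ (∫ t, g t ∂ρ) / s := by
    rw [G_zero]
    exact Hre_at_real hs hm0
  calc ∫ θ in Set.Ico (0:ℝ) (2*π), hfun ρ g s ((r:ℂ) * Complex.exp (θ * Complex.I))
      = 2 * π * (G ρ g 0 / (G ρ g 0 + (s:ℂ))).re := h1
  _ ≤ 2 * π * ((∫ t, g t ∂ρ) / s) := by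
      apply mul_le_mul_of_nonneg_left h2 (by positivity)

lemma hfun_circle_continuous (hg : Integrable g ρ) (hg0 : ∀ t, 0 ≤ g t) {s : ℝ} (hs : 0 < s)
    {r : ℝ} (hr0 : 0 < r) (hr1 : r < 1) :
    Continuous fun θ : ℝ => hfun ρ g s ((r:ℂ) * Complex.exp (θ * Complex.I)) := by
  apply Complex.continuous_re.comp
  have hcont : ContinuousOn (fun z => G ρ g z / (G ρ g z + (s:ℂ))) (Metric.ball (0:ℂ) 1) :=
    (diffPhi hg hg0 hs).continuousOn
  apply hcont.comp_continuous (by fun_prop)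
  intro θ
  simp [Metric.mem_ball, Complex.norm_exp_ofReal_mul_I, abs_of_pos hr0, hr1]

end CWT5

namespace CWT6
open CWT CWT2 CWT3 CWT4 CWT5 Real

variable {ρ : Measure ℝ} {f : ℝ → ℂ}

lemma integrable_inv_mul (hf : Integrable f ρ) {z : ℂ} (hz : ‖z‖ < 1) :
    Integrable (fun u : ℝ => (z - Complex.exp (u * Complex.I))⁻¹ * f u) ρ := by
  have h0 : (0:ℝ) < 1 - ‖z‖ := by linarith
  apply Integrable.mono' (hf.norm.const_mul ((1 - ‖z‖)⁻¹))
  · apply AEStronglyMeasurable.mul _ hf.1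
    apply Continuous.aestronglyMeasurable
    exact Continuous.inv₀ (by fun_prop) (fun u => exp_ne z hz u)
  · filter_upwards with u
    rw [norm_mul]
    apply mul_le_mul_of_nonneg_right _ (norm_nonneg _)
    rw [norm_inv]
    exact inv_anti₀ h0 (norm_sub_exp_ge hz u)

lemma integral_W_mul_eq (hf : Integrable f ρ) {z : ℂ} (hz : ‖z‖ < 1) :
    ∫ u, W z u * f u ∂ρ
      = (∫ u, f u ∂ρ) - 2 * z * ∫ u, (z - Complex.exp (u * Complex.I))⁻¹ * f u ∂ρ := by
  have h1 : ∀ u : ℝ, W z u * f u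
      = f u - (2*z) * ((z - Complex.exp (u * Complex.I))⁻¹ * f u) := by
    intro u; rw [W]; ring
  rw [show (fun u : ℝ => W z u * f u)
      = fun u : ℝ => f u - (2*z) * ((z - Complex.exp (u * Complex.I))⁻¹ * f u) from funext h1]
  rw [integral_sub hf ((integrable_inv_mul hf hz).const_mul (2*z)), integral_const_mul]

lemma norm_integral_W_mul_le {g1 g2 g3 g4 : ℝ → ℝ}
    (h1 : Integrable g1 ρ) (h2 : Integrable g2 ρ) (h3 : Integrable g3 ρ)
    (h4 : Integrable g4 ρ)
    (hf4 : ∀ u, f u = (g1 u : ℂ) - g2 u + Complex.I * g3 u - Complex.I * g4 u)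
    {z : ℂ} (hz : ‖z‖ < 1) :
    ‖∫ u, W z u * f u ∂ρ‖
      ≤ ‖G ρ g1 z‖ + ‖G ρ g2 z‖ + ‖G ρ g3 z‖ + ‖G ρ g4 z‖ := by
  have key : ∫ u, W z u * f u ∂ρ
      = G ρ g1 z - G ρ g2 z + Complex.I * G ρ g3 z - Complex.I * G ρ g4 z := by
    have hfun : (fun u => W z u * f u)
        = fun u => (W z u * (g1 u:ℂ) - W z u * (g2 u:ℂ))
          + (Complex.I * (W z u * (g3 u:ℂ)) - Complex.I * (W z u * (g4 u:ℂ))) := by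
      funext u; rw [hf4 u]; ring
    have i1 := integrable_W_mul h1 hz
    have i2 := integrable_W_mul h2 hz
    have i3 := integrable_W_mul h3 hz
    have i4 := integrable_W_mul h4 hz
    have i3' : Integrable (fun u : ℝ => Complex.I * (W z u * (g3 u:ℂ))) ρ := i3.const_mul _
    have i4' : Integrable (fun u : ℝ => Complex.I * (W z u * (g4 u:ℂ))) ρ := i4.const_mul _
    have i12 : Integrable (fun u : ℝ => W z u * (g1 u:ℂ) - W z u * (g2 u:ℂ)) ρ := i1.sub i2
    have i34 : Integrable (fun u : ℝ => Complex.I * (W z u * (g3 u:ℂ))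
        - Complex.I * (W z u * (g4 u:ℂ))) ρ := i3'.sub i4'
    rw [hfun, integral_add i12 i34, integral_sub i1 i2, integral_sub i3' i4',
      integral_const_mul, integral_const_mul]
    rw [G, G, G, G]
    ring
  rw [key]
  have hI : ‖Complex.I‖ = 1 := Complex.norm_I
  calc ‖G ρ g1 z - G ρ g2 z + Complex.I * G ρ g3 z - Complex.I * G ρ g4 z‖
      ≤ ‖G ρ g1 z - G ρ g2 z + Complex.I * G ρ g3 z‖ + ‖Complex.I * G ρ g4 z‖ :=
        norm_sub_le _ _
  _ ≤ ‖G ρ g1 z - G ρ g2 z‖ + ‖Complex.I * G ρ g3 z‖ + ‖Complex.I * G ρ g4 z‖ := by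
        have := norm_add_le (G ρ g1 z - G ρ g2 z) (Complex.I * G ρ g3 z); linarith
  _ ≤ ‖G ρ g1 z‖ + ‖G ρ g2 z‖ + ‖G ρ g3 z‖ + ‖G ρ g4 z‖ := by
        have := norm_sub_le (G ρ g1 z) (G ρ g2 z)
        rw [norm_mul, norm_mul, hI, one_mul, one_mul]
        linarith

end CWT6

namespace CWT7
open CWT CWT2 CWT3 CWT4 CWT5 CWT6 Real

lemma mem_OmegaRegionAt {θ : ℝ} {r : ℝ} (h0 : 0 < r) (h1 : r < 1) :
    Complex.exp (θ * Complex.I) * (r:ℂ) ∈ OmegaRegionAt (1/2) θ := by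
  refine ⟨(r:ℂ), Or.inr ?_, rfl⟩
  apply Set.mem_biUnion (show (0:ℂ) ∈ Metric.ball (0:ℂ) (1/2) by
    simp only [Metric.mem_ball, dist_self]; norm_num)
  refine ⟨r, 1-r, h0, by linarith, by ring, ?_⟩
  simp [Complex.real_smul]

lemma radial_tendsto {θ : ℝ} {r : ℕ → ℝ} (h0 : ∀ n, 0 < r n) (h1 : ∀ n, r n < 1)
    (hlim : Filter.Tendsto r Filter.atTop (nhds 1)) :
    Filter.Tendsto (fun n => Complex.exp (θ * Complex.I) * (r n : ℂ)) Filter.atTop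
      (nhdsWithin (Complex.exp (θ * Complex.I)) (OmegaRegionAt (1/2) θ)) := by
  rw [tendsto_nhdsWithin_iff]
  constructor
  · have h2 : Filter.Tendsto (fun n => ((r n : ℝ) : ℂ)) Filter.atTop (nhds 1) := by
      have := (Complex.continuous_ofReal.tendsto 1).comp hlim
      simpa [Function.comp_def] using this
    have h3 := h2.const_mul (Complex.exp (θ * Complex.I))
    simpa using h3
  · filter_upwards with n using mem_OmegaRegionAt (h0 n) (h1 n)

end CWT7


namespace CWT8
open CWT CWT2 CWT3 CWT4 CWT5 CWT6 CWT7 Real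

lemma sum_half_le
    {ρ : Measure ℝ} {f : ℝ → ℂ} (hfρ : Integrable f ρ)
    {g1 g2 g3 g4 : ℝ → ℝ} (h1 : Integrable g1 ρ) (h2 : Integrable g2 ρ)
    (h3 : Integrable g3 ρ) (h4 : Integrable g4 ρ)
    (h10 : ∀ u, 0 ≤ g1 u) (h20 : ∀ u, 0 ≤ g2 u) (h30 : ∀ u, 0 ≤ g3 u) (h40 : ∀ u, 0 ≤ g4 u)
    (hf4 : ∀ u, f u = (g1 u : ℂ) - g2 u + Complex.I * g3 u - Complex.I * g4 u)
    {s : ℝ} (hs : 0 < s) {z : ℂ} (hz : ‖z‖ < 1)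
    (hbig : 4*s < ‖(∫ u, f u ∂ρ)
      - 2 * z * ∫ u, (z - Complex.exp (u * Complex.I))⁻¹ * f u ∂ρ‖) :
    1/2 ≤ hfun ρ g1 s z + hfun ρ g2 s z + hfun ρ g3 s z + hfun ρ g4 s z := by
  rw [← integral_W_mul_eq hfρ hz] at hbig
  have hb2 := lt_of_lt_of_le hbig (norm_integral_W_mul_le h1 h2 h3 h4 hf4 hz)
  have hn1 := hfun_nonneg h1 h10 hs hz
  have hn2 := hfun_nonneg h2 h20 hs hz
  have hn3 := hfun_nonneg h3 h30 hs hz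
  have hn4 := hfun_nonneg h4 h40 hs hz
  have hone : s < ‖G ρ g1 z‖ ∨ s < ‖G ρ g2 z‖ ∨ s < ‖G ρ g3 z‖ ∨ s < ‖G ρ g4 z‖ := by
    by_contra hcon
    push_neg at hcon
    obtain ⟨c1, c2, c3, c4⟩ := hcon
    linarith
  rcases hone with h | h | h | h
  · have := hfun_ge_half h1 h10 hs hz h.le; linarith
  · have := hfun_ge_half h2 h20 hs hz h.le; linarith
  · have := hfun_ge_half h3 h30 hs hz h.le; linarith
  · have := hfun_ge_half h4 h40 hs hz h.le; linarith

end CWT8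


open CWT CWT2 CWT3 CWT4 CWT5 CWT6 CWT7 CWT8 in
/-- there is an absolute constant `C > 0` such that for every complex Borel
measure `μ = f dν` of finite total variation on the circle and every `t > 0`, the normalized
Lebesgue measure of the set of `θ ∈ [0, 2π)` at which the non-tangential limit of `I_μ` exists
and has modulus `> t` is at most `C ‖μ‖ / t`. -/
theorem cauchyIntegral_ntLimit_weak_type :
    ∃ C : ℝ, 0 < C ∧
      ∀ (ν : Measure ℝ), IsFiniteMeasure ν → ∀ f : ℝ → ℂ,
        IntegrableOn f (Set.Ico (0 : ℝ) (2 * Real.pi)) ν →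
        ∀ t : ℝ, 0 < t →
          volume {θ ∈ Set.Ico (0 : ℝ) (2 * Real.pi) |
              ∃ L : ℂ, HasNTLimit (cauchyIntegral ν f) θ L ∧ t < ‖L‖}
              / ENNReal.ofReal (2 * Real.pi)
            ≤ ENNReal.ofReal (C * totalVariation ν f / t) := by
  refine ⟨32, by norm_num, ?_⟩
  intro ν hν f hf t ht
  have hπ : (0:ℝ) < 2 * Real.pi := Real.two_pi_pos
  set ρ := ν.restrict (Set.Ico (0:ℝ) (2*Real.pi)) with hρdef
  have hfρ : Integrable f ρ := hf
  set TV := totalVariation ν f with hTVdef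
  have hTVρ : TV = ∫ u, ‖f u‖ ∂ρ := rfl
  have hTV0 : 0 ≤ TV := by rw [hTVρ]; exact integral_nonneg fun u => norm_nonneg _
  set E := {θ ∈ Set.Ico (0:ℝ) (2*Real.pi) |
      ∃ L : ℂ, HasNTLimit (cauchyIntegral ν f) θ L ∧ t < ‖L‖} with hEdef
  by_cases hcase : t ≤ 32 * TV
  · -- trivial case
    have h1 : volume E ≤ ENNReal.ofReal (2*Real.pi) := by
      calc volume E ≤ volume (Set.Ico (0:ℝ) (2*Real.pi)) :=
            measure_mono (Set.sep_subset _ _)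
      _ = ENNReal.ofReal (2*Real.pi) := by rw [Real.volume_Ico]; norm_num
    calc volume E / ENNReal.ofReal (2*Real.pi)
        ≤ ENNReal.ofReal (2*Real.pi) / ENNReal.ofReal (2*Real.pi) :=
          ENNReal.div_le_div_right h1 _
    _ ≤ 1 := ENNReal.div_self_le_one
    _ ≤ ENNReal.ofReal (32 * TV / t) := by
        rw [show (1:ℝ≥0∞) = ENNReal.ofReal 1 from ENNReal.ofReal_one.symm]
        apply ENNReal.ofReal_le_ofReal
        rw [le_div_iff₀ ht]
        linarith
  · push_neg at hcase
    set s := t/4 with hsdef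
    have hs : 0 < s := by positivity
    -- the four nonnegative densities
    set g1 : ℝ → ℝ := fun u => max (f u).re 0 with hg1
    set g2 : ℝ → ℝ := fun u => max (-(f u).re) 0 with hg2
    set g3 : ℝ → ℝ := fun u => max (f u).im 0 with hg3
    set g4 : ℝ → ℝ := fun u => max (-(f u).im) 0 with hg4
    have h10 : ∀ u, 0 ≤ g1 u := fun u => le_max_right _ _
    have h20 : ∀ u, 0 ≤ g2 u := fun u => le_max_right _ _
    have h30 : ∀ u, 0 ≤ g3 u := fun u => le_max_right _ _
    have h40 : ∀ u, 0 ≤ g4 u := fun u => le_max_right _ _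
    have hgle : ∀ u, g1 u ≤ ‖f u‖ ∧ g2 u ≤ ‖f u‖ ∧ g3 u ≤ ‖f u‖ ∧ g4 u ≤ ‖f u‖ := by
      intro u
      have hre := Complex.abs_re_le_norm (f u)
      have him := Complex.abs_im_le_norm (f u)
      have h0 : (0:ℝ) ≤ ‖f u‖ := norm_nonneg _
      have hre' : |(f u).re| ≤ ‖f u‖ := hre
      have him' : |(f u).im| ≤ ‖f u‖ := him
      exact ⟨max_le ((le_abs_self _).trans hre') h0,
        max_le ((neg_le_abs _).trans hre') h0,
        max_le ((le_abs_self _).trans him') h0,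
        max_le ((neg_le_abs _).trans him') h0⟩
    have hmeas1 : AEStronglyMeasurable (fun u => (f u).re) ρ :=
      Complex.continuous_re.comp_aestronglyMeasurable hfρ.1
    have hmeas2 : AEStronglyMeasurable (fun u => (f u).im) ρ :=
      Complex.continuous_im.comp_aestronglyMeasurable hfρ.1
    have hint : Integrable g1 ρ ∧ Integrable g2 ρ ∧ Integrable g3 ρ ∧ Integrable g4 ρ := by
      refine ⟨?_, ?_, ?_, ?_⟩
      · apply Integrable.mono' hfρ.norm ((continuous_id.max continuous_const).comp_aestronglyMeasurable hmeas1)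
        filter_upwards with u
        simp only [Real.norm_eq_abs, id_eq]
        rw [_root_.abs_of_nonneg (le_max_right _ _)]
        exact (hgle u).1
      · apply Integrable.mono' hfρ.norm ((continuous_neg.max continuous_const).comp_aestronglyMeasurable hmeas1)
        filter_upwards with u
        simp only [Real.norm_eq_abs, id_eq]
        rw [_root_.abs_of_nonneg (le_max_right _ _)]
        exact (hgle u).2.1
      · apply Integrable.mono' hfρ.norm ((continuous_id.max continuous_const).comp_aestronglyMeasurable hmeas2)
        filter_upwards with u
        simp only [Real.norm_eq_abs, id_eq]
        rw [_root_.abs_of_nonneg (le_max_right _ _)]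
        exact (hgle u).2.2.1
      · apply Integrable.mono' hfρ.norm ((continuous_neg.max continuous_const).comp_aestronglyMeasurable hmeas2)
        filter_upwards with u
        simp only [Real.norm_eq_abs, id_eq]
        rw [_root_.abs_of_nonneg (le_max_right _ _)]
        exact (hgle u).2.2.2
    obtain ⟨hi1, hi2, hi3, hi4⟩ := hint
    have hf4 : ∀ u, f u = (g1 u : ℂ) - g2 u + Complex.I * g3 u - Complex.I * g4 u := by
      intro u
      apply Complex.ext
      · simp [hg1, hg2, hg3, hg4, Complex.add_re, Complex.sub_re, Complex.mul_re]
      · simp [hg1, hg2, hg3, hg4, Complex.add_im, Complex.sub_im, Complex.mul_im]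
    have hmle : ∀ (g : ℝ → ℝ), Integrable g ρ → (∀ u, g u ≤ ‖f u‖) → (∀ u, 0 ≤ g u) →
        ∫ u, g u ∂ρ ≤ TV := by
      intro g hg hgle' _
      rw [hTVρ]
      exact integral_mono hg hfρ.norm hgle'
    have hm1 := hmle g1 hi1 (fun u => (hgle u).1) h10
    have hm2 := hmle g2 hi2 (fun u => (hgle u).2.1) h20
    have hm3 := hmle g3 hi3 (fun u => (hgle u).2.2.1) h30
    have hm4 := hmle g4 hi4 (fun u => (hgle u).2.2.2) h40
    have hm10 : 0 ≤ ∫ u, g1 u ∂ρ := integral_nonneg h10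
    have hm20 : 0 ≤ ∫ u, g2 u ∂ρ := integral_nonneg h20
    have hm30 : 0 ≤ ∫ u, g3 u ∂ρ := integral_nonneg h30
    have hm40 : 0 ≤ ∫ u, g4 u ∂ρ := integral_nonneg h40
    -- radii sequence
    set r : ℕ → ℝ := fun n => 1 - 1/(n+2) with hrdef
    have hr0 : ∀ n, 0 < r n := by
      intro n
      have h2 : (1:ℝ) ≤ (n:ℝ) + 2 := by
        have := Nat.cast_nonneg (α := ℝ) n; linarith
      have : 1/((n:ℝ)+2) ≤ 1 := by
        rw [div_le_one (by positivity)]; exact h2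
      have h3 : 0 < 1/((n:ℝ)+2) := by positivity
      simp only [hrdef]
      have : 1/((n:ℝ)+2) ≤ 1/2 := by
        apply div_le_div_of_nonneg_left (by norm_num) (by norm_num)
        push_cast; linarith [Nat.cast_nonneg (α := ℝ) n]
      linarith
    have hr1 : ∀ n, r n < 1 := by
      intro n
      have h3 : 0 < 1/((n:ℝ)+2) := by positivity
      simp only [hrdef]; linarith
    have hrlim : Filter.Tendsto r Filter.atTop (nhds 1) := by
      have h1 : Filter.Tendsto (fun n : ℕ => 1/((n:ℝ)+2)) Filter.atTop (nhds 0) := by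
        have h2 := (tendsto_one_div_add_atTop_nhds_zero_nat (𝕜 := ℝ)).comp
          (Filter.tendsto_add_atTop_nat 1)
        apply h2.congr
        intro n
        simp only [Function.comp_apply]
        push_cast
        norm_num
        ring
      have h3 := h1.const_sub 1
      rw [hrdef]
      simpa using h3
    -- the auxiliary subharmonic-type sum and its circle values
    set hsum : ℂ → ℝ := fun z =>
      hfun ρ g1 s z + hfun ρ g2 s z + hfun ρ g3 s z + hfun ρ g4 s z with hsumdef
    set F : ℕ → ℝ → ℝ≥0∞ := fun n θ =>
      ENNReal.ofReal (hsum ((r n : ℂ) * Complex.exp (θ * Complex.I))) with hFdef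
    have hFcont : ∀ n, Continuous (fun θ : ℝ => hsum ((r n : ℂ) * Complex.exp (θ * Complex.I))) := by
      intro n
      exact (((hfun_circle_continuous hi1 h10 hs (hr0 n) (hr1 n)).add
        (hfun_circle_continuous hi2 h20 hs (hr0 n) (hr1 n))).add
        (hfun_circle_continuous hi3 h30 hs (hr0 n) (hr1 n))).add
        (hfun_circle_continuous hi4 h40 hs (hr0 n) (hr1 n))
    have hFmeas : ∀ n, Measurable (F n) := fun n =>
      ENNReal.measurable_ofReal.comp (hFcont n).measurable
    -- pointwise claim on E
    have hEsub : E ⊆ {θ : ℝ | (1/2 : ℝ≥0∞) ≤ Filter.liminf (fun n => F n θ) Filter.atTop}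
        ∩ Set.Ico (0:ℝ) (2*Real.pi) := by
      rintro θ ⟨hθIco, L, hNT, hLt⟩
      refine ⟨?_, hθIco⟩
      have hrad : Filter.Tendsto (fun n => cauchyIntegral ν f
          (Complex.exp (θ * Complex.I) * (r n : ℂ))) Filter.atTop (nhds L) :=
        (hNT (1/2) ⟨by norm_num, by norm_num⟩).comp (radial_tendsto hr0 hr1 hrlim)
      set z : ℕ → ℂ := fun n => (r n : ℂ) * Complex.exp (θ * Complex.I) with hzdef
      have hzn : ∀ n, ‖z n‖ < 1 := by
        intro n
        simp only [hzdef, norm_mul, Complex.norm_exp_ofReal_mul_I, mul_one,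
          Complex.norm_real, Real.norm_eq_abs, abs_of_pos (hr0 n)]
        exact hr1 n
      have hzeq : ∀ n, Complex.exp (θ * Complex.I) * (r n : ℂ) = z n := fun n => mul_comm _ _
      have hztend : Filter.Tendsto z Filter.atTop (nhds (Complex.exp (θ * Complex.I))) := by
        have := ((radial_tendsto (θ := θ) hr0 hr1 hrlim).mono_right nhdsWithin_le_nhds)
        apply this.congr
        intro n; exact hzeq n
      have hrad' : Filter.Tendsto (fun n => cauchyIntegral ν f (z n)) Filter.atTop (nhds L) := by
        apply hrad.congr
        intro n; rw [hzeq n]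
      set M : ℂ := ∫ u, f u ∂ρ with hMdef
      have hMle : ‖M‖ ≤ TV := by
        rw [hTVρ]; exact norm_integral_le_integral_norm _
      have hGhat : Filter.Tendsto (fun n => M - 2 * z n * cauchyIntegral ν f (z n))
          Filter.atTop (nhds (M - 2 * Complex.exp (θ * Complex.I) * L)) := by
        apply Filter.Tendsto.sub tendsto_const_nhds
        exact ((hztend.const_mul 2).mul hrad')
      have hT : t < ‖M - 2 * Complex.exp (θ * Complex.I) * L‖ := by
        have h1 : ‖2 * Complex.exp (θ * Complex.I) * L‖ = 2 * ‖L‖ := by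
          simp [norm_mul, Complex.norm_exp_ofReal_mul_I]
        have h2 : ‖2 * Complex.exp (θ * Complex.I) * L‖ - ‖M‖
            ≤ ‖M - 2 * Complex.exp (θ * Complex.I) * L‖ := by
          rw [norm_sub_rev]
          linarith [norm_sub_norm_le (2 * Complex.exp (θ * Complex.I) * L) M]
        rw [h1] at h2
        linarith
      have hev : ∀ᶠ n in Filter.atTop, t < ‖M - 2 * z n * cauchyIntegral ν f (z n)‖ :=
        (hGhat.norm).eventually (eventually_gt_nhds hT)
      have hev2 : ∀ᶠ n in Filter.atTop, (1/2 : ℝ≥0∞) ≤ F n θ := by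
        filter_upwards [hev] with n hn
        have hbig : 4 * s < ‖(∫ u, f u ∂ρ)
            - 2 * z n * ∫ u, (z n - Complex.exp (u * Complex.I))⁻¹ * f u ∂ρ‖ := by
          have : cauchyIntegral ν f (z n)
              = ∫ u, (z n - Complex.exp (u * Complex.I))⁻¹ * f u ∂ρ := rfl
          rw [← this, ← hMdef]
          calc 4 * s = t := by rw [hsdef]; ring
          _ < _ := hn
        have hhalf := sum_half_le hfρ hi1 hi2 hi3 hi4 h10 h20 h30 h40 hf4 hs (hzn n) hbig
        have : (1/2 : ℝ≥0∞) = ENNReal.ofReal (1/2) := by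
          rw [ENNReal.ofReal_div_of_pos (by norm_num), ENNReal.ofReal_one,
            ENNReal.ofReal_ofNat]
        rw [this, hFdef]
        exact ENNReal.ofReal_le_ofReal (by simpa [hsumdef, hzdef] using hhalf)
      exact Filter.le_liminf_of_le (by isBoundedDefault) hev2
    -- measure-theoretic conclusion
    set gl : ℝ → ℝ≥0∞ := fun θ => Filter.liminf (fun n => F n θ) Filter.atTop with hgldef
    have hglmeas : Measurable gl := Measurable.liminf hFmeas
    have hSmeas : MeasurableSet {θ : ℝ | (1/2 : ℝ≥0∞) ≤ gl θ} :=
      measurableSet_le measurable_const hglmeas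
    have hvol1 : volume E
        ≤ (volume.restrict (Set.Ico (0:ℝ) (2*Real.pi))) {θ : ℝ | (1/2:ℝ≥0∞) ≤ gl θ} := by
      rw [Measure.restrict_apply hSmeas]
      exact measure_mono hEsub
    have hcheb := mul_meas_ge_le_lintegral₀
      (μ := volume.restrict (Set.Ico (0:ℝ) (2*Real.pi))) hglmeas.aemeasurable (1/2 : ℝ≥0∞)
    have hIb : ∀ n, ∫⁻ θ in Set.Ico (0:ℝ) (2*Real.pi), F n θ
        ≤ ENNReal.ofReal (2*Real.pi*(4*TV)/s) := by
      intro n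
      have hcont := hFcont n
      have hzc : ∀ θ : ℝ, ‖((r n:ℂ)*Complex.exp (θ*Complex.I))‖ < 1 := by
        intro θ
        simp only [norm_mul, Complex.norm_exp_ofReal_mul_I, mul_one,
          Complex.norm_real, Real.norm_eq_abs, abs_of_pos (hr0 n)]
        exact hr1 n
      have hnn : ∀ θ : ℝ, 0 ≤ hsum ((r n:ℂ)*Complex.exp (θ*Complex.I)) := by
        intro θ
        have q1 := hfun_nonneg hi1 h10 hs (hzc θ)
        have q2 := hfun_nonneg hi2 h20 hs (hzc θ)
        have q3 := hfun_nonneg hi3 h30 hs (hzc θ)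
        have q4 := hfun_nonneg hi4 h40 hs (hzc θ)
        simp only [hsumdef]; linarith
      have hInt : IntegrableOn (fun θ : ℝ => hsum ((r n:ℂ)*Complex.exp (θ*Complex.I)))
          (Set.Ico (0:ℝ) (2*Real.pi)) volume :=
        (hcont.integrableOn_Icc).mono_set Set.Ico_subset_Icc_self
      have heq : (∫⁻ θ in Set.Ico (0:ℝ) (2*Real.pi), F n θ)
          = ENNReal.ofReal (∫ θ in Set.Ico (0:ℝ) (2*Real.pi),
              hsum ((r n:ℂ)*Complex.exp (θ*Complex.I))) :=
        (ofReal_integral_eq_lintegral_ofReal hInt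
          (Filter.Eventually.of_forall fun θ => hnn θ)).symm
      rw [heq]
      apply ENNReal.ofReal_le_ofReal
      have hci : ∀ (g : ℝ → ℝ), Integrable g ρ → (∀ u, 0 ≤ g u) →
          IntegrableOn (fun θ : ℝ => hfun ρ g s ((r n:ℂ)*Complex.exp (θ*Complex.I)))
            (Set.Ico (0:ℝ) (2*Real.pi)) volume := by
        intro g hg hg0
        exact ((hfun_circle_continuous hg hg0 hs (hr0 n) (hr1 n)).integrableOn_Icc).mono_set
          Set.Ico_subset_Icc_self
      have hc1 := hci g1 hi1 h10
      have hc2 := hci g2 hi2 h20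
      have hc3 := hci g3 hi3 h30
      have hc4 := hci g4 hi4 h40
      have hc12 : IntegrableOn (fun θ : ℝ => hfun ρ g1 s ((r n:ℂ)*Complex.exp (θ*Complex.I))
          + hfun ρ g2 s ((r n:ℂ)*Complex.exp (θ*Complex.I)))
          (Set.Ico (0:ℝ) (2*Real.pi)) volume := hc1.add hc2
      have hc123 : IntegrableOn (fun θ : ℝ => (hfun ρ g1 s ((r n:ℂ)*Complex.exp (θ*Complex.I))
          + hfun ρ g2 s ((r n:ℂ)*Complex.exp (θ*Complex.I)))
          + hfun ρ g3 s ((r n:ℂ)*Complex.exp (θ*Complex.I)))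
          (Set.Ico (0:ℝ) (2*Real.pi)) volume := hc12.add hc3
      have hsplit : (∫ θ in Set.Ico (0:ℝ) (2*Real.pi), hsum ((r n:ℂ)*Complex.exp (θ*Complex.I)))
          = (∫ θ in Set.Ico (0:ℝ) (2*Real.pi), hfun ρ g1 s ((r n:ℂ)*Complex.exp (θ*Complex.I)))
          + (∫ θ in Set.Ico (0:ℝ) (2*Real.pi), hfun ρ g2 s ((r n:ℂ)*Complex.exp (θ*Complex.I)))
          + (∫ θ in Set.Ico (0:ℝ) (2*Real.pi), hfun ρ g3 s ((r n:ℂ)*Complex.exp (θ*Complex.I)))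
          + (∫ θ in Set.Ico (0:ℝ) (2*Real.pi), hfun ρ g4 s ((r n:ℂ)*Complex.exp (θ*Complex.I))) := by
        simp only [hsumdef]
        rw [integral_add hc123 hc4, integral_add hc12 hc3, integral_add hc1 hc2]
      rw [hsplit]
      have hb1 := hfun_circle_integral hi1 h10 hs (hr0 n) (hr1 n)
      have hb2 := hfun_circle_integral hi2 h20 hs (hr0 n) (hr1 n)
      have hb3 := hfun_circle_integral hi3 h30 hs (hr0 n) (hr1 n)
      have hb4 := hfun_circle_integral hi4 h40 hs (hr0 n) (hr1 n)
      calc (∫ θ in Set.Ico (0:ℝ) (2*Real.pi), hfun ρ g1 s ((r n:ℂ)*Complex.exp (θ*Complex.I)))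
          + (∫ θ in Set.Ico (0:ℝ) (2*Real.pi), hfun ρ g2 s ((r n:ℂ)*Complex.exp (θ*Complex.I)))
          + (∫ θ in Set.Ico (0:ℝ) (2*Real.pi), hfun ρ g3 s ((r n:ℂ)*Complex.exp (θ*Complex.I)))
          + (∫ θ in Set.Ico (0:ℝ) (2*Real.pi), hfun ρ g4 s ((r n:ℂ)*Complex.exp (θ*Complex.I)))
          ≤ 2*Real.pi*((∫ u, g1 u ∂ρ)/s) + 2*Real.pi*((∫ u, g2 u ∂ρ)/s)
            + 2*Real.pi*((∫ u, g3 u ∂ρ)/s) + 2*Real.pi*((∫ u, g4 u ∂ρ)/s) :=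
            add_le_add (add_le_add (add_le_add hb1 hb2) hb3) hb4
      _ = 2*Real.pi*(((∫ u, g1 u ∂ρ) + (∫ u, g2 u ∂ρ) + (∫ u, g3 u ∂ρ) + (∫ u, g4 u ∂ρ))/s) := by
            ring
      _ ≤ 2*Real.pi*((4*TV)/s) := by
            apply mul_le_mul_of_nonneg_left _ hπ.le
            exact (div_le_div_iff_of_pos_right hs).mpr (by linarith)
      _ = 2*Real.pi*(4*TV)/s := by ring
    have hlimb : (∫⁻ θ in Set.Ico (0:ℝ) (2*Real.pi), gl θ)
        ≤ ENNReal.ofReal (2*Real.pi*(4*TV)/s) := by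
      calc (∫⁻ θ in Set.Ico (0:ℝ) (2*Real.pi), gl θ)
          ≤ Filter.liminf (fun n => ∫⁻ θ in Set.Ico (0:ℝ) (2*Real.pi), F n θ) Filter.atTop :=
            lintegral_liminf_le hFmeas
      _ ≤ Filter.liminf (fun _ : ℕ => ENNReal.ofReal (2*Real.pi*(4*TV)/s)) Filter.atTop :=
            Filter.liminf_le_liminf (Filter.Eventually.of_forall hIb)
      _ = ENNReal.ofReal (2*Real.pi*(4*TV)/s) := Filter.liminf_const _
    have h21 : (2:ℝ≥0∞) * (1/2) = 1 := by
      rw [one_div]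
      exact ENNReal.mul_inv_cancel (by norm_num) (by norm_num)
    have hE2 : volume E ≤ ENNReal.ofReal (2*(2*Real.pi*(4*TV)/s)) := by
      calc volume E
          ≤ (volume.restrict (Set.Ico (0:ℝ) (2*Real.pi))) {θ : ℝ | (1/2:ℝ≥0∞) ≤ gl θ} := hvol1
      _ = 2 * ((1/2) * (volume.restrict (Set.Ico (0:ℝ) (2*Real.pi))) {θ : ℝ | (1/2:ℝ≥0∞) ≤ gl θ}) := by
            rw [← mul_assoc, h21, one_mul]
      _ ≤ 2 * ∫⁻ θ in Set.Ico (0:ℝ) (2*Real.pi), gl θ := mul_le_mul_right hcheb 2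
      _ ≤ 2 * ENNReal.ofReal (2*Real.pi*(4*TV)/s) := mul_le_mul_right hlimb 2
      _ = ENNReal.ofReal (2*(2*Real.pi*(4*TV)/s)) := by
            rw [ENNReal.ofReal_mul (by norm_num : (0:ℝ) ≤ 2)]
            norm_num
    calc volume E / ENNReal.ofReal (2*Real.pi)
        ≤ ENNReal.ofReal (2*(2*Real.pi*(4*TV)/s)) / ENNReal.ofReal (2*Real.pi) :=
          ENNReal.div_le_div_right hE2 _
    _ = ENNReal.ofReal (2*(2*Real.pi*(4*TV)/s) / (2*Real.pi)) :=
          (ENNReal.ofReal_div_of_pos hπ).symm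
    _ = ENNReal.ofReal (32 * TV / t) := by
        congr 1
        rw [hsdef]
        have hπ0 : Real.pi ≠ 0 := Real.pi_ne_zero
        field_simp
        ring


end
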